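/- arXiv:2402.05173 — 3 statements merged into one kernel-verified Lean document; each statement's English description precedes it below -/
import Mathlib

section
/- For every k with 0 ≤ k ≤ min{d, n−d}, there exists a multilinear monomial of degree d in n variables that does not vanish under the Young symmetrizer of the canonical standard Young tableau of shape (n−k, k); in particular, the monomial M = x_1 x_2 ··· x_d works. -/
/-- The row group of the canonical standard Young tableau of shape `(n-k, k)`:
permutations preserving the two rows `{0, …, n-k-1}` and `{n-k, …, n-1}`. -/
def rowGroup (n k : ℕ) : Finset (Equiv.Perm (Fin n)) :=
  Finset.univ.filter fun σ => ∀ i : Fin n, ((σ i : ℕ) < n - k ↔ (i : ℕ) < n - k)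

/-- The column of an entry of the canonical tableau of shape `(n-k, k)`:
the first row has entries `0, …, n-k-1` in columns `0, …, n-k-1`, and the second
row has entries `n-k, …, n-1` in columns `0, …, k-1`. -/
def canonCol (n k : ℕ) (i : Fin n) : ℕ :=
  if (i : ℕ) < n - k then (i : ℕ) else (i : ℕ) - (n - k)

/-- The column group of the canonical tableau of shape `(n-k, k)`. -/
def colGroup (n k : ℕ) : Finset (Equiv.Perm (Fin n)) :=
  Finset.univ.filter fun σ => ∀ i : Fin n, canonCol n k (σ i) = canonCol n k i

namespace YoungAux

open MvPolynomial Finset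

variable {n : ℕ}

/-- indicator exponent vector of a finset -/
noncomputable def ind (S : Finset (Fin n)) : Fin n →₀ ℕ :=
  ∑ i ∈ S, Finsupp.single i 1

lemma ind_apply (S : Finset (Fin n)) (j : Fin n) :
    ind S j = if j ∈ S then 1 else 0 := by
  classical
  simp [ind, Finsupp.finset_sum_apply, Finsupp.single_apply]

lemma ind_inj {S T : Finset (Fin n)} (h : ind S = ind T) : S = T := by
  classical
  ext j
  have := congrArg (fun f : Fin n →₀ ℕ => f j) h
  simp only [ind_apply] at this
  by_cases hS : j ∈ S <;> by_cases hT : j ∈ T <;> simp_all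

lemma prodX (S : Finset (Fin n)) :
    (∏ j ∈ S, X j : MvPolynomial (Fin n) ℝ) = monomial (ind S) 1 := by
  classical
  induction S using Finset.induction_on with
  | empty => simp [ind]
  | insert _ _ h ih =>
      rw [Finset.prod_insert h, ih]
      simp only [ind]
      rw [Finset.sum_insert h, X, monomial_mul, one_mul]

lemma renameProd (f : Fin n → Fin n) (hf : Function.Injective f)
    (S : Finset (Fin n)) :
    rename f (∏ i ∈ S, X i : MvPolynomial (Fin n) ℝ)
      = monomial (ind (S.image f)) 1 := by
  classical
  rw [map_prod]
  simp only [rename_X]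
  rw [← Finset.prod_image (fun a _ b _ hab => hf hab)]
  exact prodX _

lemma coeff_rename_prod (f : Fin n → Fin n) (hf : Function.Injective f)
    (S T : Finset (Fin n)) :
    MvPolynomial.coeff (ind T)
        (rename f (∏ i ∈ S, X i : MvPolynomial (Fin n) ℝ))
      = if S.image f = T then (1 : ℝ) else 0 := by
  classical
  rw [renameProd f hf S, coeff_monomial]
  by_cases h : S.image f = T
  · rw [if_pos h, if_pos (by rw [h])]
  · rw [if_neg h, if_neg (fun he => h (ind_inj he))]

/-- the key combinatorial lemma: if `c ∘ r` preserves `{0,…,d-1}` with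
`c` in the column group and `r` in the row group, then `c = 1`. -/
lemma key {n k d : ℕ} (hkd : k ≤ d) (_hdn : d ≤ n) (hdnk : d ≤ n - k)
    (c r : Equiv.Perm (Fin n)) (hc : c ∈ colGroup n k) (hr : r ∈ rowGroup n k)
    (h : (Finset.univ.filter (fun i : Fin n => (i : ℕ) < d)).image (⇑c ∘ ⇑r)
        = Finset.univ.filter (fun i : Fin n => (i : ℕ) < d)) :
    c = 1 := by
  classical
  have hc' : ∀ i : Fin n, canonCol n k (c i) = canonCol n k i :=
    (Finset.mem_filter.mp hc).2
  have hr' : ∀ i : Fin n, ((r i : ℕ) < n - k ↔ (i : ℕ) < n - k) :=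
    (Finset.mem_filter.mp hr).2
  have step1 : ∀ i : Fin n, (i : ℕ) < d → c (r i) = r i ∧ (r i : ℕ) < d := by
    intro i hi
    have h1 : (r i : ℕ) < n - k := (hr' i).mpr (lt_of_lt_of_le hi hdnk)
    have h2 : (c (r i) : ℕ) < d := by
      have hmem : c (r i) ∈
          (Finset.univ.filter (fun j : Fin n => (j : ℕ) < d)) := by
        rw [← h]
        exact Finset.mem_image_of_mem _
          (Finset.mem_filter.mpr ⟨Finset.mem_univ _, hi⟩)
      exact (Finset.mem_filter.mp hmem).2
    have h3 : (c (r i) : ℕ) < n - k := lt_of_lt_of_le h2 hdnk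
    have hcan := hc' (r i)
    rw [canonCol, canonCol, if_pos h3, if_pos h1] at hcan
    have heq : c (r i) = r i := Fin.ext hcan
    exact ⟨heq, heq ▸ h2⟩
  have step2 : ∀ j : Fin n, (j : ℕ) < d → c j = j := by
    intro j hj
    have hmem : j ∈ (Finset.univ.filter (fun i : Fin n => (i : ℕ) < d)).image
        (⇑c ∘ ⇑r) := by
      rw [h]; exact Finset.mem_filter.mpr ⟨Finset.mem_univ _, hj⟩
    obtain ⟨i, hi, hij⟩ := Finset.mem_image.mp hmem
    have hi' : (i : ℕ) < d := (Finset.mem_filter.mp hi).2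
    obtain ⟨he, _⟩ := step1 i hi'
    simp only [Function.comp_apply] at hij
    rw [he] at hij
    rw [← hij, he, hij]
  refine Equiv.ext fun x => ?_
  show c x = x
  by_cases hx : (x : ℕ) < d
  · exact step2 x hx
  · by_cases hx1 : (x : ℕ) < n - k
    · -- first row, x ≥ d ≥ k
      have hcx := hc' x
      rw [canonCol, canonCol, if_pos hx1] at hcx
      by_cases hy : ((c x : ℕ) < n - k)
      · rw [if_pos hy] at hcx
        exact Fin.ext hcx
      · rw [if_neg hy] at hcx
        exfalso
        have h1 : (c x : ℕ) < n := (c x).isLt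
        omega
    · -- second row
      have hj : (x : ℕ) - (n - k) < k := by
        have := x.isLt; omega
      have hcx := hc' x
      rw [canonCol, canonCol, if_neg hx1] at hcx
      by_cases hy : ((c x : ℕ) < n - k)
      · rw [if_pos hy] at hcx
        exfalso
        have hjd : (c x : ℕ) < d := by omega
        have := step2 (c x) hjd
        have hx2 : c (c x) = c x := this
        have : c x = x := c.injective hx2
        omega
      · rw [if_neg hy] at hcx
        refine Fin.ext ?_
        omega

end YoungAux

/-- For every `k` with `0 ≤ k ≤ min d (n-d)` the multilinear monomial
`M = x₀ x₁ ⋯ x_{d-1}` of degree `d` does not vanish under the Young symmetrizer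
`Ŷ = Ĉ ∘ R̂` of the canonical standard Young tableau of shape `(n-k, k)`. -/
theorem young_symmetrizer_nonzero_on_monomial
    {n k d : ℕ} (hd : d ≤ n) (hk : k ≤ min d (n - d)) :
    (∑ c ∈ colGroup n k, ((Equiv.Perm.sign c : ℤ) •
        MvPolynomial.rename (⇑c)
          (∑ r ∈ rowGroup n k,
            MvPolynomial.rename (⇑r)
              ((∏ i ∈ Finset.univ.filter (fun i : Fin n => (i : ℕ) < d),
                MvPolynomial.X i : MvPolynomial (Fin n) ℝ))))) ≠ 0 := by
  classical
  open MvPolynomial Finset YoungAux in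
  have hkd : k ≤ d := le_trans hk (min_le_left _ _)
  have hdnk : d ≤ n - k := by
    have := le_trans hk (min_le_right _ _); omega
  set D : Finset (Fin n) := Finset.univ.filter (fun i : Fin n => (i : ℕ) < d)
    with hD
  have h1row : (1 : Equiv.Perm (Fin n)) ∈ rowGroup n k :=
    Finset.mem_filter.mpr ⟨Finset.mem_univ _, fun i => Iff.rfl⟩
  have h1col : (1 : Equiv.Perm (Fin n)) ∈ colGroup n k :=
    Finset.mem_filter.mpr ⟨Finset.mem_univ _, fun i => rfl⟩
  intro hzero
  have hco := congrArg (MvPolynomial.coeff (ind D)) hzero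
  rw [MvPolynomial.coeff_zero] at hco
  -- compute the coefficient
  have hcoeff : MvPolynomial.coeff (ind D)
      (∑ c ∈ colGroup n k, ((Equiv.Perm.sign c : ℤ) •
        MvPolynomial.rename (⇑c)
          (∑ r ∈ rowGroup n k,
            MvPolynomial.rename (⇑r)
              ((∏ i ∈ D, MvPolynomial.X i : MvPolynomial (Fin n) ℝ)))))
      = ∑ c ∈ colGroup n k, (Equiv.Perm.sign c : ℤ) •
          ∑ r ∈ rowGroup n k,
            (if D.image (⇑c ∘ ⇑r) = D then (1 : ℝ) else 0) := by
    rw [MvPolynomial.coeff_sum]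
    refine Finset.sum_congr rfl fun c hc => ?_
    rw [MvPolynomial.coeff_smul]
    congr 1
    rw [map_sum, MvPolynomial.coeff_sum]
    refine Finset.sum_congr rfl fun r hr => ?_
    rw [MvPolynomial.rename_rename]
    exact coeff_rename_prod _ (c.injective.comp r.injective) D D
  rw [hcoeff] at hco
  -- only c = 1 contributes
  have honly : (∑ c ∈ colGroup n k, (Equiv.Perm.sign c : ℤ) •
      ∑ r ∈ rowGroup n k, (if D.image (⇑c ∘ ⇑r) = D then (1 : ℝ) else 0))
      = ∑ r ∈ rowGroup n k, (if D.image ⇑r = D then (1 : ℝ) else 0) := by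
    rw [Finset.sum_eq_single_of_mem 1 h1col]
    · simp only [map_one, Units.val_one, one_smul, Equiv.Perm.coe_one,
        Function.id_comp]
      rfl
    · intro c hc hc1
      have hinner : (∑ r ∈ rowGroup n k,
          (if D.image (⇑c ∘ ⇑r) = D then (1 : ℝ) else 0)) = 0 := by
        refine Finset.sum_eq_zero fun r hr => ?_
        rw [if_neg]
        intro him
        exact hc1 (key hkd hd hdnk c r hc hr him)
      rw [hinner, smul_zero]
  rw [honly] at hco
  -- the remaining sum is positive
  have hpos : (0 : ℝ) < ∑ r ∈ rowGroup n k,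
      (if D.image ⇑r = D then (1 : ℝ) else 0) := by
    refine Finset.sum_pos' (fun r _ => by positivity) ⟨1, h1row, ?_⟩
    simp
  exact hpos.ne' hco
end

section
/- For 0 ≤ d ≤ n, the sum over k from 0 to min{d, n−d} of n!·(n−2k+1)/(k!·(n−k+1)!) equals the binomial coefficient C(n, d). -/
lemma two_row_term_eq (n k : ℕ) (h : 2 * (k + 1) ≤ n) :
    ((n.factorial * (n - 2 * (k + 1) + 1) : ℕ) : ℚ) /
        (((k + 1).factorial * (n - (k + 1) + 1).factorial : ℕ) : ℚ)
      = (n.choose (k + 1) : ℚ) - (n.choose k : ℚ) := by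
  obtain ⟨j, hj⟩ : ∃ j, n = 2 * k + 2 + j := ⟨n - (2 * k + 2), by omega⟩
  subst hj
  have h1 : 2 * k + 2 + j - 2 * (k + 1) + 1 = j + 1 := by omega
  have h2 : 2 * k + 2 + j - (k + 1) + 1 = k + j + 2 := by omega
  have h3 : 2 * k + 2 + j - (k + 1) = k + j + 1 := by omega
  have h4 : 2 * k + 2 + j - k = k + j + 2 := by omega
  rw [h1, h2]
  rw [Nat.cast_choose ℚ (show k + 1 ≤ 2 * k + 2 + j by omega),
    Nat.cast_choose ℚ (show k ≤ 2 * k + 2 + j by omega), h3, h4]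
  have e1 : (k + j + 2).factorial = (k + j + 2) * (k + j + 1).factorial :=
    Nat.factorial_succ _
  have e2 : (k + 1).factorial = (k + 1) * k.factorial := Nat.factorial_succ _
  rw [e1, e2]
  have f1 : (k.factorial : ℚ) ≠ 0 := Nat.cast_ne_zero.mpr (Nat.factorial_ne_zero _)
  have f2 : ((k + j + 1).factorial : ℚ) ≠ 0 := Nat.cast_ne_zero.mpr (Nat.factorial_ne_zero _)
  have f3 : ((k : ℚ) + 1) ≠ 0 := by positivity
  have f4 : ((k : ℚ) + (j : ℚ) + 2) ≠ 0 := by positivity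
  push_cast
  field_simp
  ring

lemma two_row_sum (n m : ℕ) (h : 2 * m ≤ n) :
    ∑ k ∈ Finset.range (m + 1),
        ((n.factorial * (n - 2 * k + 1) : ℕ) : ℚ) /
          ((k.factorial * (n - k + 1).factorial : ℕ) : ℚ)
      = (n.choose m : ℚ) := by
  induction m with
  | zero =>
      rw [Finset.sum_range_one]
      have h1 : n - 2 * 0 + 1 = n + 1 := by omega
      have h2 : n - 0 + 1 = n + 1 := by omega
      rw [h1, Nat.factorial_zero, Nat.factorial_succ]
      have f1 : (n.factorial : ℚ) ≠ 0 := Nat.cast_ne_zero.mpr (Nat.factorial_ne_zero _)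
      have f3 : ((n : ℚ) + 1) ≠ 0 := by positivity
      push_cast
      field_simp
      simp
  | succ m ih =>
      rw [Finset.sum_range_succ, ih (by omega), two_row_term_eq n m h]
      ring

/-- The dimensions of the irreducible representations of `S_n` labeled by the
two-row partitions `(n-k, k)`, for `0 ≤ k ≤ min d (n-d)`, sum to the binomial
coefficient `C(n, d)`. -/
theorem sum_two_row_dims_eq_choose (n d : ℕ) (hd : d ≤ n) :
    ∑ k ∈ Finset.range (min d (n - d) + 1),
        ((n.factorial * (n - 2 * k + 1) : ℕ) : ℚ) /
          ((k.factorial * (n - k + 1).factorial : ℕ) : ℚ)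
      = (n.choose d : ℚ) := by
  rw [two_row_sum n (min d (n - d)) (by omega)]
  rcases le_total d (n - d) with h | h
  · rw [min_eq_left h]
  · rw [min_eq_right h, ← Nat.choose_symm hd]
end

section
/- Suppose the eigenvalue λ of a positive semidefinite kernel operator with unit trace belongs to an eigenspace carrying an irrep of S_L labeled by (L−k, k). Then λ ≤ k!·(L−k+1)! / (L!·(L−2k+1)), and hence the number of samples N = σ²/λ needed to reach learnability 1/2 satisfies N ≥ σ²·L!·(L−2k+1)/(k!·(L−k+1)!) = Ω(L^k). -/
lemma dim_mul_denom (L k : ℕ) (hk : 2 * k ≤ L) :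
    (L.factorial * (L - 2 * k + 1) / (k.factorial * (L - k + 1).factorial)) *
      (k.factorial * (L - k + 1).factorial) = L.factorial * (L - 2 * k + 1) := by
  apply Nat.div_mul_cancel
  rcases Nat.eq_zero_or_pos k with hk0 | hk1
  · subst hk0
    refine ⟨1, ?_⟩
    simp [Nat.factorial_succ, Nat.mul_comm]
  · have hkL : k ≤ L := by omega
    set a := L.choose k with ha_def
    set b := L.choose (k - 1) with hb_def
    have hab : a * k = b * (L - k + 1) := by
      have h := Nat.choose_succ_right_eq L (k - 1)
      have h1 : k - 1 + 1 = k := by omega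
      have h2 : L - (k - 1) = L - k + 1 := by omega
      rw [h1, h2] at h
      exact h
    have hba : b ≤ a := by
      have h1 : b * (L - k + 1) ≤ a * (L - k + 1) := by
        rw [← hab]; exact Nat.mul_le_mul_left a (by omega)
      exact Nat.le_of_mul_le_mul_right h1 (by omega)
    refine ⟨a - b, ?_⟩
    have ha : a * k.factorial * (L - k).factorial = L.factorial :=
      Nat.choose_mul_factorial_mul_factorial hkL
    have hb : b * (k - 1).factorial * (L - (k - 1)).factorial = L.factorial :=
      Nat.choose_mul_factorial_mul_factorial (by omega)
    have hLk1 : L - (k - 1) = L - k + 1 := by omega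
    rw [hLk1] at hb
    have hfk : k.factorial = k * (k - 1).factorial := by
      obtain ⟨m, rfl⟩ : ∃ m, k = m + 1 := ⟨k - 1, by omega⟩
      simp [Nat.factorial_succ]
    have hfLk : (L - k + 1).factorial = (L - k + 1) * (L - k).factorial :=
      Nat.factorial_succ _
    have e1 : a * (k.factorial * (L - k + 1).factorial)
        = L.factorial * (L - k + 1) := by
      rw [hfLk, ← ha]; ring
    have e2 : b * (k.factorial * (L - k + 1).factorial)
        = L.factorial * k := by
      rw [hfk, ← hb]; ring
    have e3 : L.factorial * (L - k + 1) - L.factorial * k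
        = L.factorial * (L - 2 * k + 1) := by
      rw [← Nat.mul_sub]
      congr 1
      omega
    calc L.factorial * (L - 2 * k + 1)
        = L.factorial * (L - k + 1) - L.factorial * k := e3.symm
      _ = a * (k.factorial * (L - k + 1).factorial)
          - b * (k.factorial * (L - k + 1).factorial) := by rw [e1, e2]
      _ = (a - b) * (k.factorial * (L - k + 1).factorial) := (Nat.sub_mul _ _ _).symm
      _ = k.factorial * (L - k + 1).factorial * (a - b) := Nat.mul_comm _ _


open Finset in
lemma trace_lower_bound {X : Type*} [Fintype X] [DecidableEq X]
    (A : X → X → ℝ) (hA : ∀ x y, A x y = A y x)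
    (hpsd : ∀ w : X → ℝ, 0 ≤ ∑ x, ∑ y, w x * A x y * w y)
    (lam : ℝ) (d : ℕ) (v : Fin d → EuclideanSpace ℝ X)
    (hli : LinearIndependent ℝ v)
    (heig : ∀ i x, ∑ y, A x y * v i y = lam * v i x) :
    lam * d ≤ ∑ x, A x x := by
  classical
  haveI : WellFoundedLT (Fin d) := inferInstance
  set e : Fin d → EuclideanSpace ℝ X := InnerProductSpace.gramSchmidtNormed ℝ v with he_def
  have hon : Orthonormal ℝ e := InnerProductSpace.gramSchmidtNormed_orthonormal (𝕜 := ℝ) (f := v) hli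
  -- eigen property is preserved under span
  have hspan : ∀ w : EuclideanSpace ℝ X, w ∈ Submodule.span ℝ (Set.range v) →
      ∀ x, ∑ y, A x y * w y = lam * w x := by
    intro w hw
    induction hw using Submodule.span_induction with
    | mem w hw =>
      obtain ⟨i, rfl⟩ := hw
      exact heig i
    | zero => intro x; simp
    | add w1 w2 _ _ h1 h2 =>
      intro x
      have : ∀ y, A x y * (w1 + w2) y = A x y * w1 y + A x y * w2 y := by
        intro y; simp [mul_add]
      rw [Finset.sum_congr rfl fun y _ => this y, Finset.sum_add_distrib, h1 x, h2 x]
      simp [mul_add]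
    | smul c w _ h1 =>
      intro x
      have : ∀ y, A x y * (c • w) y = c * (A x y * w y) := by
        intro y; simp; ring
      rw [Finset.sum_congr rfl fun y _ => this y, ← Finset.mul_sum, h1 x]
      simp; ring
  have heigs : ∀ j x, ∑ y, A x y * e j y = lam * e j x := by
    intro j
    apply hspan
    have hg : InnerProductSpace.gramSchmidt ℝ v j ∈ Submodule.span ℝ (Set.range v) := by
      have := InnerProductSpace.gramSchmidt_mem_span (𝕜 := ℝ) v (le_refl j)
      exact Submodule.span_mono (Set.image_subset_range _ _) this
    exact Submodule.smul_mem _ _ hg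
  -- orthonormality in coordinates
  have hortho : ∀ j j', ∑ x, e j x * e j' x = (if j = j' then (1:ℝ) else 0) := by
    intro j j'
    have := orthonormal_iff_ite.mp hon j j'
    rw [PiLp.inner_apply] at this
    simpa [mul_comm] using this
  -- pointwise bound
  have hpt : ∀ x0, lam * ∑ j, (e j x0)^2 ≤ A x0 x0 := by
    intro x0
    set c : Fin d → ℝ := fun j => e j x0 with hc
    set s : X → ℝ := fun y => ∑ j, c j * e j y with hs
    set w : X → ℝ := Pi.single x0 1 with hw
    have hAs : ∀ x, ∑ y, A x y * s y = lam * s x := by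
      intro x
      have h1 : ∀ y, A x y * s y = ∑ j, c j * (A x y * e j y) := by
        intro y; rw [hs]; simp only []
        rw [Finset.mul_sum]
        exact Finset.sum_congr rfl fun j _ => by ring
      rw [Finset.sum_congr rfl fun y _ => h1 y, Finset.sum_comm]
      have h2 : ∀ j, ∑ y, c j * (A x y * e j y) = c j * (lam * e j x) := by
        intro j; rw [← Finset.mul_sum, heigs]
      rw [Finset.sum_congr rfl fun j _ => h2 j, hs]
      simp only []
      rw [Finset.mul_sum]
      exact Finset.sum_congr rfl fun j _ => by ring
    have hws : ∑ x, w x * s x = ∑ j, c j ^ 2 := by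
      rw [hw]
      rw [Finset.sum_eq_single x0]
      · simp [hs, hc]; exact Finset.sum_congr rfl fun j _ => by ring
      · intro b _ hb; simp [Pi.single_apply, hb]
      · intro h; exact absurd (Finset.mem_univ x0) h
    have hss : ∑ x, s x * s x = ∑ j, c j ^ 2 := by
      have h1 : ∀ x, s x * s x = ∑ j, ∑ j', (c j * c j') * (e j x * e j' x) := by
        intro x; rw [hs]; simp only []
        rw [Finset.sum_mul_sum]
        exact Finset.sum_congr rfl fun j _ => Finset.sum_congr rfl fun j' _ => by ring
      rw [Finset.sum_congr rfl fun x _ => h1 x]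
      rw [Finset.sum_comm]
      have h2 : ∀ j, ∑ x, ∑ j', (c j * c j') * (e j x * e j' x) = c j ^ 2 := by
        intro j
        rw [Finset.sum_comm]
        have h3 : ∀ j', ∑ x, (c j * c j') * (e j x * e j' x)
            = (c j * c j') * (if j = j' then (1:ℝ) else 0) := by
          intro j'; rw [← hortho j j', Finset.mul_sum]
        rw [Finset.sum_congr rfl fun j' _ => h3 j']
        simp [Finset.sum_ite_eq, pow_two]
      exact Finset.sum_congr rfl fun j _ => h2 j
    -- apply psd to w - s
    have h0 := hpsd (fun y => w y - s y)
    have hAw : ∀ x, ∑ y, A x y * w y = A x x0 := by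
      intro x
      rw [hw, Finset.sum_eq_single x0]
      · simp
      · intro b _ hb; simp [Pi.single_apply, hb]
      · intro h; exact absurd (Finset.mem_univ x0) h
    have hexp : ∑ x, ∑ y, (w x - s x) * A x y * (w y - s y)
        = A x0 x0 - lam * ∑ j, c j ^ 2 := by
      have h1 : ∀ x, ∑ y, (w x - s x) * A x y * (w y - s y)
          = (w x - s x) * ((∑ y, A x y * w y) - (∑ y, A x y * s y)) := by
        intro x
        rw [← Finset.sum_sub_distrib, Finset.mul_sum]
        exact Finset.sum_congr rfl fun y _ => by ring
      rw [Finset.sum_congr rfl fun x _ => h1 x]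
      have h2 : ∀ x, (w x - s x) * ((∑ y, A x y * w y) - (∑ y, A x y * s y))
          = w x * A x x0 - s x * A x x0 - lam * (w x * s x) + lam * (s x * s x) := by
        intro x
        rw [hAw x, hAs x]
        ring
      rw [Finset.sum_congr rfl fun x _ => h2 x]
      rw [Finset.sum_add_distrib, Finset.sum_sub_distrib, Finset.sum_sub_distrib,
        ← Finset.mul_sum, ← Finset.mul_sum, hws, hss]
      have h3 : ∑ x, w x * A x x0 = A x0 x0 := by
        rw [hw, Finset.sum_eq_single x0]
        · simp
        · intro b _ hb; simp [Pi.single_apply, hb]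
        · intro h; exact absurd (Finset.mem_univ x0) h
      have h4 : ∑ x, s x * A x x0 = lam * ∑ j, c j ^ 2 := by
        have : ∀ x, s x * A x x0 = A x0 x * s x := by
          intro x; rw [hA x0 x]; ring
        rw [Finset.sum_congr rfl fun x _ => this x, hAs x0, hs]
        simp only []
        rw [Finset.mul_sum, Finset.mul_sum]
        exact Finset.sum_congr rfl fun j _ => by rw [hc]; ring
      rw [h3, h4]
      ring
    rw [hexp] at h0
    linarith
  -- sum over x0
  have hsum := Finset.sum_le_sum (fun x0 (_ : x0 ∈ Finset.univ) => hpt x0)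
  have hlhs : ∑ x0, lam * ∑ j, (e j x0)^2 = lam * d := by
    rw [← Finset.mul_sum, Finset.sum_comm]
    have : ∀ j : Fin d, ∑ x, (e j x)^2 = 1 := by
      intro j
      have h := hortho j j
      rw [if_pos rfl] at h
      rw [← h]
      exact Finset.sum_congr rfl fun x _ => (pow_two _)
    rw [Finset.sum_congr rfl fun j _ => this j]
    simp [mul_comm]
  rw [hlhs] at hsum
  exact hsum


lemma kernel_eig_bound {X : Type*} [Fintype X] (p : X → ℝ) (hp : ∀ x, 0 ≤ p x)
    (ker : X → X → ℝ) (hsymm : ∀ x y, ker x y = ker y x)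
    (hpsd : ∀ u : X → ℝ, 0 ≤ ∑ x, ∑ y, u x * ker x y * u y)
    (htrace : ∑ x, p x * ker x x ≤ 1) (lam : ℝ) (hlam : 0 < lam)
    (d : ℕ) (u : Fin d → X → ℝ) (hli : LinearIndependent ℝ u)
    (heig : ∀ i x, ∑ y, p y * ker x y * u i y = lam * u i x) :
    lam * d ≤ 1 := by
  classical
  have hsq : ∀ x, Real.sqrt (p x) * Real.sqrt (p x) = p x :=
    fun x => Real.mul_self_sqrt (hp x)
  set A : X → X → ℝ := fun x y => Real.sqrt (p x) * ker x y * Real.sqrt (p y) with hA_def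
  have hA : ∀ x y, A x y = A y x := by
    intro x y; rw [hA_def]; simp only []; rw [hsymm x y]; ring
  have hApsd : ∀ w : X → ℝ, 0 ≤ ∑ x, ∑ y, w x * A x y * w y := by
    intro w
    have h0 := hpsd (fun x => w x * Real.sqrt (p x))
    have he : ∑ x, ∑ y, (w x * Real.sqrt (p x)) * ker x y * (w y * Real.sqrt (p y))
        = ∑ x, ∑ y, w x * A x y * w y := by
      refine Finset.sum_congr rfl fun x _ => Finset.sum_congr rfl fun y _ => ?_
      rw [hA_def]; ring
    rw [he] at h0; exact h0
  set vf : Fin d → X → ℝ := fun i x => Real.sqrt (p x) * u i x with hvf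
  have hveig : ∀ i x, ∑ y, A x y * vf i y = lam * vf i x := by
    intro i x
    have h1 : ∀ y, A x y * vf i y = Real.sqrt (p x) * (p y * ker x y * u i y) := by
      intro y
      calc A x y * vf i y
          = Real.sqrt (p x) * ((Real.sqrt (p y) * Real.sqrt (p y)) * ker x y * u i y) := by
            rw [hA_def, hvf]; ring
        _ = Real.sqrt (p x) * (p y * ker x y * u i y) := by rw [hsq y]
    rw [Finset.sum_congr rfl fun y _ => h1 y, ← Finset.mul_sum, heig i x, hvf]
    simp only []; ring
  have hvli : LinearIndependent ℝ vf := by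
    rw [Fintype.linearIndependent_iff] at hli ⊢
    intro c hc
    have hcx : ∀ x, Real.sqrt (p x) * (∑ i, c i * u i x) = 0 := by
      intro x
      have h2 := congrFun hc x
      simp only [Finset.sum_apply, Pi.smul_apply, smul_eq_mul, Pi.zero_apply, hvf] at h2
      rw [Finset.mul_sum, ← h2]
      exact Finset.sum_congr rfl fun i _ => by ring
    have hw0 : ∀ x, (∑ i, c i * u i x) = 0 := by
      intro x
      have h3 : lam * (∑ i, c i * u i x) = 0 := by
        have h5 : lam * (∑ i, c i * u i x) = ∑ i, ∑ y, c i * (p y * ker x y * u i y) := by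
          rw [Finset.mul_sum]
          refine Finset.sum_congr rfl fun i _ => ?_
          rw [← Finset.mul_sum, heig i x]; ring
        rw [h5, Finset.sum_comm]
        apply Finset.sum_eq_zero
        intro y _
        have h6 : ∀ i, c i * (p y * ker x y * u i y)
            = (ker x y * Real.sqrt (p y)) * (Real.sqrt (p y) * (c i * u i y)) := by
          intro i
          calc c i * (p y * ker x y * u i y)
              = c i * ((Real.sqrt (p y) * Real.sqrt (p y)) * ker x y * u i y) := by rw [hsq y]
            _ = (ker x y * Real.sqrt (p y)) * (Real.sqrt (p y) * (c i * u i y)) := by ring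
        rw [Finset.sum_congr rfl fun i _ => h6 i, ← Finset.mul_sum]
        have h7 : ∑ i, Real.sqrt (p y) * (c i * u i y) = 0 := by
          rw [← Finset.mul_sum]
          exact hcx y
        rw [h7, mul_zero]
      rcases mul_eq_zero.mp h3 with h | h
      · exact absurd h (ne_of_gt hlam)
      · exact h
    apply hli c
    funext x
    have h9 := hw0 x
    simp only [Finset.sum_apply, Pi.smul_apply, smul_eq_mul, Pi.zero_apply]
    exact h9
  have hbound := trace_lower_bound A hA hApsd lam d
    (fun i => (WithLp.toLp 2 (vf i) : EuclideanSpace ℝ X))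
    (hvli.map' (WithLp.linearEquiv 2 ℝ (X → ℝ)).symm.toLinearMap (LinearEquiv.ker _)) hveig
  have htr : ∑ x, A x x ≤ 1 := by
    have h8 : ∀ x, A x x = p x * ker x x := by
      intro x
      calc A x x = (Real.sqrt (p x) * Real.sqrt (p x)) * ker x x := by rw [hA_def]; ring
        _ = p x * ker x x := by rw [hsq x]
    rw [Finset.sum_congr rfl fun x _ => h8 x]
    exact htrace
  exact hbound.trans htr


/-- Suppose an eigenvalue `λ` of a positive semidefinite kernel operator with
unit trace (on a finite probability space) belongs to an eigenspace carrying an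
irrep of `S_L` labeled by `(L-k, k)`, hence of dimension
`dim = L!·(L-2k+1)/(k!·(L-k+1)!)` — witnessed by `dim` linearly independent
eigenfunctions.  Then `λ ≤ 1/dim = k!·(L-k+1)!/(L!·(L-2k+1))`, and hence the
number of samples `N = σ²/λ` needed to reach learnability `1/2` satisfies
`N ≥ σ²·L!·(L-2k+1)/(k!·(L-k+1)!) = Ω(L^k)`. -/
theorem scaling_law_bound
    {X : Type*} [Fintype X] (p : X → ℝ) (hp : ∀ x, 0 ≤ p x)
    (hp1 : ∑ x, p x = 1) (ker : X → X → ℝ) (hsymm : ∀ x y, ker x y = ker y x)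
    (hpsd : ∀ u : X → ℝ, 0 ≤ ∑ x, ∑ y, u x * ker x y * u y)
    (htrace : ∑ x, p x * ker x x ≤ 1)
    (L k : ℕ) (hk : 2 * k ≤ L) (lam : ℝ)
    (u : Fin (L.factorial * (L - 2 * k + 1) / (k.factorial * (L - k + 1).factorial))
          → X → ℝ)
    (hli : LinearIndependent ℝ u)
    (heig : ∀ i x, ∑ y, p y * ker x y * u i y = lam * u i x) :
    lam ≤ ((k.factorial * (L - k + 1).factorial : ℕ) : ℝ) /
        ((L.factorial * (L - 2 * k + 1) : ℕ) : ℝ) ∧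
    (0 < lam → ∀ σsq : ℝ, 0 < σsq →
      σsq * (((L.factorial * (L - 2 * k + 1) : ℕ) : ℝ) /
          ((k.factorial * (L - k + 1).factorial : ℕ) : ℝ)) ≤ σsq / lam) := by
  have hdd : (L.factorial * (L - 2 * k + 1) / (k.factorial * (L - k + 1).factorial)) *
      (k.factorial * (L - k + 1).factorial) = L.factorial * (L - 2 * k + 1) :=
    dim_mul_denom L k hk
  have hdenom_pos : 0 < k.factorial * (L - k + 1).factorial :=
    Nat.mul_pos (Nat.factorial_pos _) (Nat.factorial_pos _)
  have hnum_pos : 0 < L.factorial * (L - 2 * k + 1) :=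
    Nat.mul_pos (Nat.factorial_pos _) (by omega)
  have hDr_pos : (0:ℝ) < ((k.factorial * (L - k + 1).factorial : ℕ) : ℝ) := by
    exact_mod_cast hdenom_pos
  have hNr_pos : (0:ℝ) < ((L.factorial * (L - 2 * k + 1) : ℕ) : ℝ) := by
    exact_mod_cast hnum_pos
  have hdr : ((L.factorial * (L - 2 * k + 1) / (k.factorial * (L - k + 1).factorial) : ℕ) : ℝ)
        * ((k.factorial * (L - k + 1).factorial : ℕ) : ℝ)
      = ((L.factorial * (L - 2 * k + 1) : ℕ) : ℝ) := by
    exact_mod_cast hdd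
  have hmain : lam ≤ ((k.factorial * (L - k + 1).factorial : ℕ) : ℝ) /
      ((L.factorial * (L - 2 * k + 1) : ℕ) : ℝ) := by
    rcases le_or_gt lam 0 with hlam | hlam
    · exact hlam.trans (le_of_lt (div_pos hDr_pos hNr_pos))
    · have hld := kernel_eig_bound p hp ker hsymm hpsd htrace lam hlam _ u hli heig
      rw [le_div_iff₀ hNr_pos]
      calc lam * ((L.factorial * (L - 2 * k + 1) : ℕ) : ℝ)
          = lam * ((L.factorial * (L - 2 * k + 1) / (k.factorial * (L - k + 1).factorial) : ℕ) : ℝ)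
            * ((k.factorial * (L - k + 1).factorial : ℕ) : ℝ) := by rw [mul_assoc, hdr]
        _ ≤ 1 * ((k.factorial * (L - k + 1).factorial : ℕ) : ℝ) :=
            mul_le_mul_of_nonneg_right hld hDr_pos.le
        _ = ((k.factorial * (L - k + 1).factorial : ℕ) : ℝ) := one_mul _
  refine ⟨hmain, ?_⟩
  intro hlam σsq hσ
  have h1 : ((L.factorial * (L - 2 * k + 1) : ℕ) : ℝ) /
      ((k.factorial * (L - k + 1).factorial : ℕ) : ℝ) ≤ 1 / lam := by
    rw [div_le_div_iff₀ hDr_pos hlam]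
    rw [le_div_iff₀ hNr_pos] at hmain
    nlinarith
  calc σsq * (((L.factorial * (L - 2 * k + 1) : ℕ) : ℝ) /
        ((k.factorial * (L - k + 1).factorial : ℕ) : ℝ))
      ≤ σsq * (1 / lam) := mul_le_mul_of_nonneg_left h1 hσ.le
    _ = σsq / lam := by ring
end
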